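/- Let S be a real symmetric positive semidefinite d×d matrix, let β > 0, and let U be a real symmetric d×d matrix. For α ≥ 0 suppose Σ(α) is a real d×d matrix satisfying the Lyapunov equation (β I + α S) Σ(α) + Σ(α) (β I + α S) = U. Then for any α₁ ≥ α₂ ≥ 0 for which such solutions Σ(α₁), Σ(α₂) exist, the Frobenius norms satisfy ‖Σ(α₁)‖_F ≤ ‖Σ(α₂)‖_F ≤ ‖Σ(0)‖_F. -/

import Mathlib

/-- Frobenius norm of a real square matrix. -/
noncomputable def frobeniusNorm {d : ℕ} (M : Matrix (Fin d) (Fin d) ℝ) : ℝ :=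
  Real.sqrt (∑ i, ∑ j, (M i j) ^ 2)

open Matrix in
private lemma sq_sum_eq_trace {d : ℕ} (M : Matrix (Fin d) (Fin d) ℝ) :
    ∑ i, ∑ j, (M i j) ^ 2 = (Mᵀ * M).trace := by
  rw [Finset.sum_comm]
  simp [Matrix.trace, Matrix.mul_apply, Matrix.diag, sq]

open Matrix in
private lemma frob_conj {d : ℕ} (Q M : Matrix (Fin d) (Fin d) ℝ)
    (hQ : Q * star Q = 1) :
    ∑ i, ∑ j, ((star Q * M * Q) i j) ^ 2 = ∑ i, ∑ j, (M i j) ^ 2 := by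
  rw [sq_sum_eq_trace, sq_sum_eq_trace]
  have ht : (star Q * M * Q)ᵀ = star Q * Mᵀ * Q := by
    simp [Matrix.transpose_mul, Matrix.star_eq_conjTranspose, mul_assoc]
  rw [ht]
  calc (star Q * Mᵀ * Q * (star Q * M * Q)).trace
      = (star Q * (Mᵀ * M) * Q).trace := by
        have e : star Q * Mᵀ * Q * (star Q * M * Q)
            = star Q * Mᵀ * (Q * star Q) * (M * Q) := by noncomm_ring
        rw [e, hQ, mul_one]
        rw [show star Q * Mᵀ * (M * Q) = star Q * (Mᵀ * M) * Q by noncomm_ring]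
    _ = (Mᵀ * M).trace := by
        rw [Matrix.trace_mul_cycle, ← mul_assoc]
        have : Q * star Q = 1 := hQ
        rw [this, one_mul]

private lemma key {d : ℕ} {S U : Matrix (Fin d) (Fin d) ℝ}
    (hS : S.PosSemidef) {β : ℝ} (hβ : 0 < β) {a b : ℝ} (hb : 0 ≤ b) (hab : b ≤ a)
    {X Y : Matrix (Fin d) (Fin d) ℝ}
    (hX : (β • (1 : Matrix (Fin d) (Fin d) ℝ) + a • S) * X
        + X * (β • (1 : Matrix (Fin d) (Fin d) ℝ) + a • S) = U)
    (hY : (β • (1 : Matrix (Fin d) (Fin d) ℝ) + b • S) * Y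
        + Y * (β • (1 : Matrix (Fin d) (Fin d) ℝ) + b • S) = U) :
    frobeniusNorm X ≤ frobeniusNorm Y := by
  set u := hS.1.eigenvectorUnitary with hu_def
  set Q : Matrix (Fin d) (Fin d) ℝ := (u : Matrix (Fin d) (Fin d) ℝ)
  have hQ : Q * star Q = 1 := Matrix.mem_unitaryGroup_iff.mp u.2
  have hQ' : star Q * Q = 1 := Matrix.mem_unitaryGroup_iff'.mp u.2
  have hdiag : star Q * S * Q = Matrix.diagonal hS.1.eigenvalues := by
    have := Matrix.IsHermitian.conjStarAlgAut_star_eigenvectorUnitary hS.1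
    simpa using this
  set lam := hS.1.eigenvalues with hlam
  have hlam0 : ∀ i, 0 ≤ lam i := hS.eigenvalues_nonneg
  -- conjugated Lyapunov equation
  have conj_eq : ∀ (c : ℝ) (Z : Matrix (Fin d) (Fin d) ℝ),
      (β • (1 : Matrix (Fin d) (Fin d) ℝ) + c • S) * Z
        + Z * (β • (1 : Matrix (Fin d) (Fin d) ℝ) + c • S) = U →
      Matrix.diagonal (fun i => β + c * lam i) * (star Q * Z * Q)
        + (star Q * Z * Q) * Matrix.diagonal (fun i => β + c * lam i)
        = star Q * U * Q := by
    intro c Z hZ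
    have hD : star Q * (β • (1 : Matrix (Fin d) (Fin d) ℝ) + c • S) * Q
        = Matrix.diagonal (fun i => β + c * lam i) := by
      rw [mul_add, add_mul, Matrix.mul_smul, Matrix.mul_smul, Matrix.smul_mul, Matrix.smul_mul,
        mul_one, hQ', hdiag]
      ext i j
      by_cases h : i = j <;> simp [Matrix.diagonal_apply, h, Matrix.one_apply]
    calc Matrix.diagonal (fun i => β + c * lam i) * (star Q * Z * Q)
          + (star Q * Z * Q) * Matrix.diagonal (fun i => β + c * lam i)
        = (star Q * (β • (1 : Matrix (Fin d) (Fin d) ℝ) + c • S) * Q) * (star Q * Z * Q)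
          + (star Q * Z * Q) * (star Q * (β • (1 : Matrix (Fin d) (Fin d) ℝ) + c • S) * Q) := by
          rw [hD]
      _ = star Q * ((β • (1 : Matrix (Fin d) (Fin d) ℝ) + c • S) * Z
            + Z * (β • (1 : Matrix (Fin d) (Fin d) ℝ) + c • S)) * Q := by
          rw [show star Q * (β • (1 : Matrix (Fin d) (Fin d) ℝ) + c • S) * Q * (star Q * Z * Q)
              = star Q * (β • (1 : Matrix (Fin d) (Fin d) ℝ) + c • S) * (Q * star Q) * Z * Q by
                noncomm_ring,
            show star Q * Z * Q * (star Q * (β • (1 : Matrix (Fin d) (Fin d) ℝ) + c • S) * Q)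
              = star Q * Z * (Q * star Q) * (β • (1 : Matrix (Fin d) (Fin d) ℝ) + c • S) * Q by
                noncomm_ring, hQ]
          noncomm_ring
      _ = star Q * U * Q := by rw [hZ]
  have hX' := conj_eq a X hX
  have hY' := conj_eq b Y hY
  -- entrywise formulas
  have entry : ∀ (c : ℝ) (Z : Matrix (Fin d) (Fin d) ℝ),
      Matrix.diagonal (fun i => β + c * lam i) * (star Q * Z * Q)
        + (star Q * Z * Q) * Matrix.diagonal (fun i => β + c * lam i)
        = star Q * U * Q →
      ∀ i j, (star Q * Z * Q) i j * ((β + c * lam i) + (β + c * lam j))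
        = (star Q * U * Q) i j := by
    intro c Z hZ i j
    have := congrFun (congrFun hZ i) j
    simpa [Matrix.add_apply, Matrix.diagonal_mul, Matrix.mul_diagonal, mul_comm,
      mul_add, add_mul] using this
  have hXe := entry a X hX'
  have hYe := entry b Y hY'
  -- compare squares entrywise
  have hsq : ∀ i j, ((star Q * X * Q) i j) ^ 2 ≤ ((star Q * Y * Q) i j) ^ 2 := by
    intro i j
    have ca : (0:ℝ) < (β + a * lam i) + (β + a * lam j) := by
      have := hlam0 i; have := hlam0 j; nlinarith
    have cb : (0:ℝ) < (β + b * lam i) + (β + b * lam j) := by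
      have := hlam0 i; have := hlam0 j; nlinarith
    have hcab : (β + b * lam i) + (β + b * lam j) ≤ (β + a * lam i) + (β + a * lam j) := by
      have := hlam0 i; have := hlam0 j; nlinarith
    have hx : (star Q * X * Q) i j = (star Q * U * Q) i j / ((β + a * lam i) + (β + a * lam j)) := by
      field_simp [ne_of_gt ca]; linarith [hXe i j]
    have hy : (star Q * Y * Q) i j = (star Q * U * Q) i j / ((β + b * lam i) + (β + b * lam j)) := by
      field_simp [ne_of_gt cb]; linarith [hYe i j]
    rw [hx, hy, div_pow, div_pow]
    apply div_le_div_of_nonneg_left (by positivity) (by positivity)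
    nlinarith
  -- conclude
  unfold frobeniusNorm
  apply Real.sqrt_le_sqrt
  rw [← frob_conj Q X hQ, ← frob_conj Q Y hQ]
  exact Finset.sum_le_sum fun i _ => Finset.sum_le_sum fun j _ => hsq i j

theorem lyapunov_solution_frobenius_monotone
    (d : ℕ) (S U : Matrix (Fin d) (Fin d) ℝ)
    (hS : S.PosSemidef) (β : ℝ) (hβ : 0 < β) (hU : U.IsSymm)
    (Sf : ℝ → Matrix (Fin d) (Fin d) ℝ)
    (α₁ α₂ : ℝ) (hα₂ : 0 ≤ α₂) (hα : α₂ ≤ α₁)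
    (h₁ : (β • (1 : Matrix (Fin d) (Fin d) ℝ) + α₁ • S) * Sf α₁
        + Sf α₁ * (β • (1 : Matrix (Fin d) (Fin d) ℝ) + α₁ • S) = U)
    (h₂ : (β • (1 : Matrix (Fin d) (Fin d) ℝ) + α₂ • S) * Sf α₂
        + Sf α₂ * (β • (1 : Matrix (Fin d) (Fin d) ℝ) + α₂ • S) = U)
    (h₀ : (β • (1 : Matrix (Fin d) (Fin d) ℝ)) * Sf 0
        + Sf 0 * (β • (1 : Matrix (Fin d) (Fin d) ℝ)) = U) :
    frobeniusNorm (Sf α₁) ≤ frobeniusNorm (Sf α₂) ∧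
      frobeniusNorm (Sf α₂) ≤ frobeniusNorm (Sf 0) := by
  have h₀' : (β • (1 : Matrix (Fin d) (Fin d) ℝ) + (0:ℝ) • S) * Sf 0
      + Sf 0 * (β • (1 : Matrix (Fin d) (Fin d) ℝ) + (0:ℝ) • S) = U := by
    simpa using h₀
  exact ⟨key hS hβ hα₂ hα h₁ h₂, key hS hβ le_rfl hα₂ h₂ h₀'⟩
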